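/- The double-robust estimator (equation form (9)) based on weighting plus augmentation is algebraically identical to the regression estimator plus a weighted residual correction (equation form (10)): for any finite sample, θ̂₀^wt + (Σᵢ Gᵢ)^{-1} Σᵢ (Gᵢ − êᵢ)(ν̂ᵢ − μ̂ᵢ)/(1 − êᵢ) = θ̂₀^reg + (Σᵢ Gᵢ)^{-1} Σᵢ (1−Gᵢ)(R̂_{i,t+1} − R̂_{it})·êᵢ/(1−êᵢ), where R̂_{i,t+1} = Y_{i,t+1} − ν̂ᵢ, R̂_{it} = Y_{it} − μ̂ᵢ. -/

import Mathlib

open Finset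

/-- Algebraic equivalence of the two forms of the double-robust DID estimator:
weighting plus augmentation (form (9)) equals regression plus weighted residual
correction (form (10)), for any finite sample with `Gᵢ ∈ {0,1}`, `êᵢ ∈ [0,1)` and
`Σᵢ Gᵢ > 0`. -/
theorem stmt_6 (N : ℕ) (Yt Yt1 G e ν μ : Fin N → ℝ)
    (hG : ∀ i, G i = 0 ∨ G i = 1)
    (he : ∀ i, 0 ≤ e i ∧ e i < 1)
    (hGpos : 0 < ∑ i, G i) :
    ((∑ i, G i * Yt i + ∑ i, (1 - G i) * (Yt1 i - Yt i) * e i / (1 - e i)) / (∑ i, G i)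
        + (∑ i, (G i - e i) * (ν i - μ i) / (1 - e i)) / (∑ i, G i))
      = ((∑ i, G i * Yt i + ∑ i, G i * (ν i - μ i)) / (∑ i, G i)
        + (∑ i, (1 - G i) * ((Yt1 i - ν i) - (Yt i - μ i)) * e i / (1 - e i)) / (∑ i, G i)) := by
  have key : ∀ i, (1 - G i) * (Yt1 i - Yt i) * e i / (1 - e i)
      + (G i - e i) * (ν i - μ i) / (1 - e i)
      = G i * (ν i - μ i)
      + (1 - G i) * ((Yt1 i - ν i) - (Yt i - μ i)) * e i / (1 - e i) := by
    intro i
    have hne : (1 : ℝ) - e i ≠ 0 := by linarith [(he i).2]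
    rcases hG i with h | h <;> field_simp [h] <;> ring
  rw [← add_div, ← add_div]
  congr 1
  rw [add_assoc, add_assoc]
  congr 1
  rw [← Finset.sum_add_distrib, ← Finset.sum_add_distrib]
  exact Finset.sum_congr rfl fun i _ => key i
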